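/- Let φ(z) ∈ ℂ(z) be a rational map of degree r ≥ 2. If φ² = φ∘φ is not a polynomial, then the number of distinct poles of φⁿ tends to infinity as n → ∞. -/

import Mathlib

open Polynomial OnePoint Filter
open scoped Classical

/-- The self-map of `ℙ¹(F) = F ∪ {∞}` induced by the rational function `u/v`. -/
noncomputable def ratMap {F : Type*} [Field F] (u v : Polynomial F) :
    OnePoint F → OnePoint F :=
  fun P =>
    Option.rec
      (if v.natDegree < u.natDegree then (∞ : OnePoint F)
       else if u.natDegree < v.natDegree then ((0 : F) : OnePoint F)
       else ((u.leadingCoeff / v.leadingCoeff : F) : OnePoint F))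
      (fun z => if v.eval z = 0 then (∞ : OnePoint F)
                else ((u.eval z / v.eval z : F) : OnePoint F))
      P

section Aux

variable {u v : Polynomial ℂ}

lemma ratMap_coe (u v : Polynomial ℂ) (z : ℂ) : ratMap u v (z : OnePoint ℂ) =
    (if v.eval z = 0 then (∞ : OnePoint ℂ)
     else ((u.eval z / v.eval z : ℂ) : OnePoint ℂ)) := rfl

lemma ratMap_inf (u v : Polynomial ℂ) : ratMap u v (∞ : OnePoint ℂ) =
    (if v.natDegree < u.natDegree then (∞ : OnePoint ℂ)
     else if u.natDegree < v.natDegree then ((0 : ℂ) : OnePoint ℂ)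
     else ((u.leadingCoeff / v.leadingCoeff : ℂ) : OnePoint ℂ)) := rfl

lemma not_both_eval (hcop : IsCoprime u v) (z : ℂ) :
    ¬ (u.eval z = 0 ∧ v.eval z = 0) := by
  rintro ⟨h1, h2⟩
  obtain ⟨a, b, hab⟩ := hcop
  have := congrArg (Polynomial.eval z) hab
  simp [h1, h2] at this

lemma fiber_inf_coe (z : ℂ) : ratMap u v (z : OnePoint ℂ) = ∞ ↔ v.eval z = 0 := by
  rw [ratMap_coe]
  split_ifs with h
  · simp [h]
  · simp [h, OnePoint.coe_ne_infty]

lemma fiber_coe_coe (hcop : IsCoprime u v) (c z : ℂ) :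
    ratMap u v (z : OnePoint ℂ) = (c : OnePoint ℂ) ↔ (u - C c * v).eval z = 0 := by
  rw [ratMap_coe]
  split_ifs with h
  · simp only [eval_sub, eval_mul, eval_C, h, mul_zero, sub_zero]
    constructor
    · intro h'; exact absurd h' (OnePoint.infty_ne_coe _)
    · intro h'; exact absurd ⟨h', h⟩ (not_both_eval hcop z)
  · rw [OnePoint.coe_eq_coe, div_eq_iff h]
    simp only [eval_sub, eval_mul, eval_C, sub_eq_zero]

lemma sub_C_mul_ne_zero (hcop : IsCoprime u v) (hv : 0 < v.natDegree) (c : ℂ) :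
    u - C c * v ≠ 0 := by
  intro h
  have hdvd : v ∣ u := ⟨C c, by linear_combination h⟩
  have h1 : IsUnit v := hcop.isUnit_of_dvd' hdvd dvd_rfl
  have := Polynomial.natDegree_eq_zero_of_isUnit h1
  omega

lemma u_ne_zero' (hcop : IsCoprime u v) (hv : 0 < v.natDegree) : u ≠ 0 := by
  intro h
  have h1 : IsUnit v := hcop.isUnit_of_dvd' (h ▸ dvd_zero v) dvd_rfl
  have := Polynomial.natDegree_eq_zero_of_isUnit h1
  omega

lemma v_ne_zero' (hv : 0 < v.natDegree) : v ≠ 0 := by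
  intro h; rw [h] at hv; simp at hv

/-- Surjectivity of the rational map. -/
lemma ratMap_surj (hcop : IsCoprime u v) (hv : 0 < v.natDegree) :
    Function.Surjective (ratMap u v) := by
  intro Q
  induction Q using OnePoint.rec with
  | infty =>
    obtain ⟨z, hz⟩ := Complex.exists_root (natDegree_pos_iff_degree_pos.mp hv)
    exact ⟨(z : OnePoint ℂ), (fiber_inf_coe z).mpr hz⟩
  | coe c =>
    by_cases hroot : ∃ z, (u - C c * v).eval z = 0
    · obtain ⟨z, hz⟩ := hroot
      exact ⟨(z : OnePoint ℂ), (fiber_coe_coe hcop c z).mpr hz⟩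
    · push_neg at hroot
      have hg0 : u - C c * v ≠ 0 := sub_C_mul_ne_zero hcop hv c
      have hgdeg : (u - C c * v).natDegree = 0 := by
        by_contra h
        obtain ⟨z, hz⟩ := Complex.exists_root
          (natDegree_pos_iff_degree_pos.mp (Nat.pos_of_ne_zero h))
        exact hroot z hz
      refine ⟨(∞ : OnePoint ℂ), ?_⟩
      rw [ratMap_inf]
      rcases lt_trichotomy u.natDegree v.natDegree with hlt | heq | hgt
      · have hc : c = 0 := by
          by_contra hc
          have h1 : (C c * v).natDegree = v.natDegree := natDegree_C_mul hc
          have h2 : (u - C c * v).natDegree = v.natDegree := by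
            rw [natDegree_sub_eq_right_of_natDegree_lt (by omega)]; omega
          omega
        rw [if_neg (by omega), if_pos hlt, hc]
      · have hvpos : 0 < v.natDegree := hv
        have hcoeff : (u - C c * v).coeff v.natDegree = 0 :=
          coeff_eq_zero_of_natDegree_lt (by omega)
        have hco : u.coeff v.natDegree - c * v.coeff v.natDegree = 0 := by
          simpa using hcoeff
        rw [if_neg (by omega), if_neg (by omega), OnePoint.coe_eq_coe]
        have hlv : v.leadingCoeff ≠ 0 := leadingCoeff_ne_zero.mpr (v_ne_zero' hv)
        rw [div_eq_iff hlv]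
        unfold leadingCoeff
        rw [heq]
        linear_combination hco
      · exfalso
        have h1 : (u - C c * v).natDegree = u.natDegree := by
          apply natDegree_sub_eq_left_of_natDegree_lt
          exact lt_of_le_of_lt (natDegree_C_mul_le c v) hgt
        omega

lemma fiber_finite (hcop : IsCoprime u v) (hv : 0 < v.natDegree) (Q : OnePoint ℂ) :
    ((ratMap u v) ⁻¹' {Q}).Finite := by
  induction Q using OnePoint.rec with
  | infty =>
    apply Set.Finite.subset
      (((Polynomial.finite_setOf_isRoot (v_ne_zero' hv)).image
        ((↑) : ℂ → OnePoint ℂ)).insert (∞ : OnePoint ℂ))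
    intro P hP
    induction P using OnePoint.rec with
    | infty => exact Set.mem_insert _ _
    | coe z =>
      have : v.eval z = 0 := (fiber_inf_coe z).mp hP
      exact Set.mem_insert_of_mem _ ⟨z, this, rfl⟩
  | coe c =>
    apply Set.Finite.subset
      (((Polynomial.finite_setOf_isRoot (sub_C_mul_ne_zero hcop hv c)).image
        ((↑) : ℂ → OnePoint ℂ)).insert (∞ : OnePoint ℂ))
    intro P hP
    induction P using OnePoint.rec with
    | infty => exact Set.mem_insert _ _
    | coe z =>
      have : (u - C c * v).eval z = 0 := (fiber_coe_coe hcop c z).mp hP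
      exact Set.mem_insert_of_mem _ ⟨z, this, rfl⟩

/-- The Wronskian. -/
noncomputable def wrons (u v : Polynomial ℂ) : Polynomial ℂ :=
  derivative u * v - u * derivative v

lemma wrons_ne_zero (hcop : IsCoprime u v) (hv : 0 < v.natDegree) :
    wrons u v ≠ 0 := by
  intro h
  have heq : derivative u * v = u * derivative v := by
    have := sub_eq_zero.mp h
    linear_combination this
  have hu : u ≠ 0 := u_ne_zero' hcop hv
  by_cases hu' : derivative u = 0
  · rw [hu', zero_mul] at heq
    have hv' : derivative v = 0 := by
      rcases mul_eq_zero.mp heq.symm with h | h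
      · exact absurd h hu
      · exact h
    have := natDegree_eq_zero_of_derivative_eq_zero hv'
    omega
  · have hdvd : u ∣ derivative u := by
      apply hcop.dvd_of_dvd_mul_right
      exact ⟨derivative v, heq⟩
    have h1 := Polynomial.natDegree_le_of_dvd hdvd hu'
    have h2 := natDegree_derivative_le u
    have h3 : u.natDegree = 0 := by omega
    exact hu' (derivative_of_natDegree_zero h3)

lemma wrons_natDegree_le {r : ℕ} (hr : r = max u.natDegree v.natDegree) (hr2 : 2 ≤ r)
    (hcop : IsCoprime u v) (hv : 0 < v.natDegree) :
    (wrons u v).natDegree ≤ 2 * r - 2 := by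
  have hW : wrons u v ≠ 0 := wrons_ne_zero hcop hv
  have hu : u.natDegree ≤ r := by omega
  have hvr : v.natDegree ≤ r := by omega
  have hu' : (derivative u).natDegree ≤ r - 1 :=
    le_trans (natDegree_derivative_le u) (by omega)
  have hv' : (derivative v).natDegree ≤ r - 1 :=
    le_trans (natDegree_derivative_le v) (by omega)
  have hle : (wrons u v).natDegree ≤ 2 * r - 1 := by
    apply le_trans (natDegree_sub_le _ _)
    apply max_le
    · exact le_trans natDegree_mul_le (by omega)
    · exact le_trans natDegree_mul_le (by omega)
  have hcoeff : (wrons u v).coeff (2 * r - 1) = 0 := by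
    have e1 : (derivative u * v).coeff (2 * r - 1)
        = (derivative u).coeff (r - 1) * v.coeff r := by
      have := coeff_mul_add_eq_of_natDegree_le hu' hvr
      rwa [show r - 1 + r = 2 * r - 1 by omega] at this
    have e2 : (u * derivative v).coeff (2 * r - 1)
        = u.coeff r * (derivative v).coeff (r - 1) := by
      have := coeff_mul_add_eq_of_natDegree_le hu hv'
      rwa [show r + (r - 1) = 2 * r - 1 by omega] at this
    have d1 : (derivative u).coeff (r - 1) = u.coeff r * (r : ℂ) := by
      have := coeff_derivative u (r - 1)
      rw [show r - 1 + 1 = r by omega] at this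
      rw [this, Nat.cast_sub (by omega : 1 ≤ r)]
      push_cast
      ring
    have d2 : (derivative v).coeff (r - 1) = v.coeff r * (r : ℂ) := by
      have := coeff_derivative v (r - 1)
      rw [show r - 1 + 1 = r by omega] at this
      rw [this, Nat.cast_sub (by omega : 1 ≤ r)]
      push_cast
      ring
    unfold wrons
    rw [coeff_sub, e1, e2, d1, d2]
    ring
  by_contra hcon
  have h1 : (wrons u v).natDegree = 2 * r - 1 := by omega
  have := leadingCoeff_ne_zero.mpr hW
  rw [leadingCoeff, h1] at this
  exact this hcoeff

/-- If all roots of a nonzero polynomial equal `p` then it's `a (X - p)^deg`. -/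
lemma eq_C_mul_pow_of_roots {g : Polynomial ℂ} (hg : g ≠ 0) {p : ℂ}
    (hall : ∀ z, g.eval z = 0 → z = p) :
    g = C g.leadingCoeff * (X - C p) ^ g.natDegree := by
  have hcard : Multiset.card g.roots = g.natDegree :=
    splits_iff_card_roots.mp (IsAlgClosed.splits g)
  have hrep : g.roots = Multiset.replicate g.natDegree p := by
    rw [Multiset.eq_replicate]
    refine ⟨hcard, fun b hb => ?_⟩
    exact hall b ((mem_roots'.mp hb).2)
  have := C_leadingCoeff_mul_prod_multiset_X_sub_C (p := g) hcard
  rw [hrep, Multiset.map_replicate, Multiset.prod_replicate] at this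
  exact this.symm

lemma fiber_eq_iff {Q R : OnePoint ℂ} (h : ratMap u v ⁻¹' {Q} = {R}) :
    ∀ P', (ratMap u v P' = Q ↔ P' = R) := by
  intro P'
  constructor
  · intro h'
    have : P' ∈ ratMap u v ⁻¹' {Q} := by simp [h']
    rw [h] at this; simpa using this
  · intro h'
    have : R ∈ ratMap u v ⁻¹' {Q} := by rw [h]; rfl
    simp only [Set.mem_preimage, Set.mem_singleton_iff] at this
    rw [h']; exact this

/-- Finite totally ramified point gives a high-order factor of the Wronskian. -/
lemma pow_dvd_wrons {r : ℕ} (hr : r = max u.natDegree v.natDegree) (hr2 : 2 ≤ r)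
    (hcop : IsCoprime u v) (hv : 0 < v.natDegree) {p : ℂ}
    (hp : ratMap u v ⁻¹' {ratMap u v (p : OnePoint ℂ)} = {((p : OnePoint ℂ))}) :
    (X - C p) ^ (r - 1) ∣ wrons u v := by
  have hfib := fiber_eq_iff (Q := ratMap u v (p : OnePoint ℂ)) hp
  by_cases hQ : ratMap u v (p : OnePoint ℂ) = ∞
  · -- the fiber of ∞ is {p}
    have hvp : v.eval p = 0 := (fiber_inf_coe p).mp hQ
    have hinf : ratMap u v (∞ : OnePoint ℂ) ≠ ∞ := by
      intro h
      have := (hfib ∞).mp (by rw [h, hQ])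
      exact (OnePoint.infty_ne_coe p) this
    have hdvu : ¬ v.natDegree < u.natDegree := by
      intro h
      exact hinf (by rw [ratMap_inf, if_pos h])
    have hdv : v.natDegree = r := by omega
    have hall : ∀ z, v.eval z = 0 → z = p := by
      intro z hz
      have := (hfib (z : OnePoint ℂ)).mp (by rw [hQ]; exact (fiber_inf_coe z).mpr hz)
      exact OnePoint.coe_eq_coe.mp this
    have hveq : v = C v.leadingCoeff * (X - C p) ^ r :=
      hdv ▸ eq_C_mul_pow_of_roots (v_ne_zero' hv) hall
    have h1 : (X - C p) ^ (r - 1) ∣ v := by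
      rw [hveq]
      exact ((pow_dvd_pow _ (by omega)).mul_left _)
    have h2 : (X - C p) ^ (r - 1) ∣ derivative v := by
      refine ⟨C v.leadingCoeff * C (r : ℂ), ?_⟩
      conv_lhs => rw [hveq]
      rw [derivative_C_mul, derivative_pow, derivative_X_sub_C]
      ring
    exact dvd_sub (h1.mul_left _) (h2.mul_left _)
  · -- the fiber of a finite point c is {p}
    obtain ⟨c, hc⟩ := OnePoint.ne_infty_iff_exists.mp hQ
    set g : Polynomial ℂ := u - C c * v with hgdef
    have hg0 : g ≠ 0 := sub_C_mul_ne_zero hcop hv c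
    have hproot : g.eval p = 0 := (fiber_coe_coe hcop c p).mp hc.symm
    have hall : ∀ z, g.eval z = 0 → z = p := by
      intro z hz
      have := (hfib (z : OnePoint ℂ)).mp (by rw [← hc]; exact (fiber_coe_coe hcop c z).mpr hz)
      exact OnePoint.coe_eq_coe.mp this
    have hinf : ratMap u v (∞ : OnePoint ℂ) ≠ (c : OnePoint ℂ) := by
      intro h
      have := (hfib ∞).mp (by rw [h, hc])
      exact (OnePoint.infty_ne_coe p) this
    have hgdeg : g.natDegree = r := by
      rcases lt_trichotomy u.natDegree v.natDegree with hlt | heq | hgt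
      · -- deg u < deg v: ratMap ∞ = 0 so c ≠ 0
        have hc0 : c ≠ 0 := by
          intro h
          apply hinf
          rw [ratMap_inf, if_neg (by omega), if_pos hlt, h]
        have h1 : (C c * v).natDegree = v.natDegree := natDegree_C_mul hc0
        rw [hgdef, natDegree_sub_eq_right_of_natDegree_lt (by omega), h1]
        omega
      · -- deg u = deg v = r
        have hur : u.natDegree = r := by omega
        have hvr : v.natDegree = r := by omega
        have hlv : v.leadingCoeff ≠ 0 := leadingCoeff_ne_zero.mpr (v_ne_zero' hv)
        have hlead : u.leadingCoeff / v.leadingCoeff ≠ c := by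
          intro h
          apply hinf
          rw [ratMap_inf, if_neg (by omega), if_neg (by omega), h]
        have hne : u.coeff r - c * v.coeff r ≠ 0 := by
          intro h
          apply hlead
          rw [div_eq_iff hlv]
          unfold leadingCoeff
          rw [hur, hvr]
          linear_combination h
        have hcoeff : g.coeff r ≠ 0 := by
          rw [hgdef]
          simpa using hne
        have hle : g.natDegree ≤ r := by
          apply le_trans (natDegree_sub_le _ _)
          apply max_le (by omega)
          exact le_trans (natDegree_C_mul_le _ _) (by omega)
        exact le_antisymm hle (le_natDegree_of_ne_zero hcoeff)
      · rw [hgdef, natDegree_sub_eq_left_of_natDegree_lt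
          (lt_of_le_of_lt (natDegree_C_mul_le c v) hgt)]
        omega
    have hgeq : g = C g.leadingCoeff * (X - C p) ^ r :=
      hgdeg ▸ eq_C_mul_pow_of_roots hg0 hall
    have h1 : (X - C p) ^ (r - 1) ∣ g := by
      rw [hgeq]
      exact ((pow_dvd_pow _ (by omega)).mul_left _)
    have h2 : (X - C p) ^ (r - 1) ∣ derivative g := by
      refine ⟨C g.leadingCoeff * C (r : ℂ), ?_⟩
      conv_lhs => rw [hgeq]
      rw [derivative_C_mul, derivative_pow, derivative_X_sub_C]
      ring
    have hwr : wrons u v = derivative g * v - g * derivative v := by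
      rw [hgdef]
      unfold wrons
      rw [derivative_sub, derivative_mul, derivative_C]
      ring
    rw [hwr]
    exact dvd_sub (h2.mul_right _) (h1.mul_right _)

/-- If ∞ is totally ramified, the Wronskian has degree at most `r - 1`. -/
lemma wrons_deg_of_inf {r : ℕ} (hr : r = max u.natDegree v.natDegree) (hr2 : 2 ≤ r)
    (hcop : IsCoprime u v) (hv : 0 < v.natDegree)
    (hp : ratMap u v ⁻¹' {ratMap u v (∞ : OnePoint ℂ)} = {(∞ : OnePoint ℂ)}) :
    (wrons u v).natDegree ≤ r - 1 := by
  have hfib := fiber_eq_iff (Q := ratMap u v (∞ : OnePoint ℂ)) hp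
  by_cases hQ : ratMap u v (∞ : OnePoint ℂ) = ∞
  · -- v has no roots, contradiction with hv
    exfalso
    obtain ⟨z, hz⟩ := Complex.exists_root (natDegree_pos_iff_degree_pos.mp hv)
    have := (hfib (z : OnePoint ℂ)).mp (by rw [hQ]; exact (fiber_inf_coe z).mpr hz)
    exact (OnePoint.coe_ne_infty z) this
  · obtain ⟨c, hc⟩ := OnePoint.ne_infty_iff_exists.mp hQ
    set g : Polynomial ℂ := u - C c * v with hgdef
    have hg0 : g ≠ 0 := sub_C_mul_ne_zero hcop hv c
    have hgdeg : g.natDegree = 0 := by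
      by_contra h
      obtain ⟨z, hz⟩ := Complex.exists_root
        (natDegree_pos_iff_degree_pos.mp (Nat.pos_of_ne_zero h))
      have := (hfib (z : OnePoint ℂ)).mp
        (by rw [← hc]; exact (fiber_coe_coe hcop c z).mpr hz)
      exact (OnePoint.coe_ne_infty z) this
    have hdvr : v.natDegree = r := by
      rcases lt_trichotomy u.natDegree v.natDegree with hlt | heq | hgt
      · omega
      · omega
      · exfalso
        have h1 : g.natDegree = u.natDegree := by
          rw [hgdef]
          exact natDegree_sub_eq_left_of_natDegree_lt
            (lt_of_le_of_lt (natDegree_C_mul_le c v) hgt)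
        omega
    have hg' : derivative g = 0 := derivative_of_natDegree_zero hgdeg
    have hwr : wrons u v = derivative g * v - g * derivative v := by
      rw [hgdef]
      unfold wrons
      rw [derivative_sub, derivative_mul, derivative_C]
      ring
    rw [hwr, hg', zero_mul, zero_sub]
    rw [natDegree_neg]
    apply le_trans natDegree_mul_le
    have := natDegree_derivative_le v
    omega

/-- There are at most two totally ramified points. -/
lemma TR_le_two {r : ℕ} (hr : r = max u.natDegree v.natDegree) (hr2 : 2 ≤ r)
    (hcop : IsCoprime u v) (hv : 0 < v.natDegree) {a b c : OnePoint ℂ}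
    (ha : ratMap u v ⁻¹' {ratMap u v a} = {a})
    (hb : ratMap u v ⁻¹' {ratMap u v b} = {b})
    (hc : ratMap u v ⁻¹' {ratMap u v c} = {c}) :
    a = b ∨ a = c ∨ b = c := by
  by_contra hcon
  push_neg at hcon
  obtain ⟨hab, hac, hbc⟩ := hcon
  have hW0 : wrons u v ≠ 0 := wrons_ne_zero hcop hv
  have hWd := wrons_natDegree_le hr hr2 hcop hv
  -- two distinct finite TR points give 2(r-1) ≤ deg W
  have key2 : ∀ p q : ℂ, p ≠ q →
      ratMap u v ⁻¹' {ratMap u v (p : OnePoint ℂ)} = {((p : OnePoint ℂ))} →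
      ratMap u v ⁻¹' {ratMap u v (q : OnePoint ℂ)} = {((q : OnePoint ℂ))} →
      2 * (r - 1) ≤ (wrons u v).natDegree := by
    intro p q hpq hp hq
    have h1 := pow_dvd_wrons hr hr2 hcop hv hp
    have h2 := pow_dvd_wrons hr hr2 hcop hv hq
    have hcp : IsCoprime ((X - C p) ^ (r - 1)) ((X - C q) ^ (r - 1)) :=
      (pairwise_coprime_X_sub_C (Function.injective_id) hpq).pow
    have hdvd := hcp.mul_dvd h1 h2
    have hled := Polynomial.natDegree_le_of_dvd hdvd hW0
    have hdeg : ((X - C p) ^ (r - 1) * (X - C q) ^ (r - 1)).natDegree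
        = (r - 1) + (r - 1) := by
      rw [Polynomial.Monic.natDegree_mul ((monic_X_sub_C p).pow _)
        ((monic_X_sub_C q).pow _)]
      simp [natDegree_pow, natDegree_X_sub_C]
    rw [hdeg] at hled
    omega
  -- three distinct finite TR points give 3(r-1) ≤ deg W
  have key3 : ∀ p q w : ℂ, p ≠ q → p ≠ w → q ≠ w →
      ratMap u v ⁻¹' {ratMap u v (p : OnePoint ℂ)} = {((p : OnePoint ℂ))} →
      ratMap u v ⁻¹' {ratMap u v (q : OnePoint ℂ)} = {((q : OnePoint ℂ))} →
      ratMap u v ⁻¹' {ratMap u v (w : OnePoint ℂ)} = {((w : OnePoint ℂ))} →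
      False := by
    intro p q w hpq hpw hqw hp hq hw
    have h1 := pow_dvd_wrons hr hr2 hcop hv hp
    have h2 := pow_dvd_wrons hr hr2 hcop hv hq
    have h3 := pow_dvd_wrons hr hr2 hcop hv hw
    have hcp : IsCoprime ((X - C p) ^ (r - 1)) ((X - C q) ^ (r - 1)) :=
      (pairwise_coprime_X_sub_C (Function.injective_id) hpq).pow
    have hcp2 : IsCoprime ((X - C p) ^ (r - 1) * (X - C q) ^ (r - 1))
        ((X - C w) ^ (r - 1)) := by
      apply IsCoprime.mul_left
      · exact (pairwise_coprime_X_sub_C (Function.injective_id) hpw).pow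
      · exact (pairwise_coprime_X_sub_C (Function.injective_id) hqw).pow
    have hdvd := hcp2.mul_dvd (hcp.mul_dvd h1 h2) h3
    have hled := Polynomial.natDegree_le_of_dvd hdvd hW0
    have hdeg : ((X - C p) ^ (r - 1) * (X - C q) ^ (r - 1) * (X - C w) ^ (r - 1)).natDegree
        = (r - 1) + (r - 1) + (r - 1) := by
      rw [Polynomial.Monic.natDegree_mul
        (((monic_X_sub_C p).pow _).mul ((monic_X_sub_C q).pow _)) ((monic_X_sub_C w).pow _),
        Polynomial.Monic.natDegree_mul ((monic_X_sub_C p).pow _) ((monic_X_sub_C q).pow _)]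
      simp [natDegree_pow, natDegree_X_sub_C]
    rw [hdeg] at hled
    omega
  induction a using OnePoint.rec with
  | infty =>
    induction b using OnePoint.rec with
    | infty => exact hab rfl
    | coe pb =>
      induction c using OnePoint.rec with
      | infty => exact hac rfl
      | coe pc =>
        have hWi := wrons_deg_of_inf hr hr2 hcop hv ha
        have := key2 pb pc (fun h => hbc (by rw [h])) hb hc
        omega
  | coe pa =>
    induction b using OnePoint.rec with
    | infty =>
      induction c using OnePoint.rec with
      | infty => exact hbc rfl
      | coe pc =>
        have hWi := wrons_deg_of_inf hr hr2 hcop hv hb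
        have := key2 pa pc (fun h => hac (by rw [h])) ha hc
        omega
    | coe pb =>
      induction c using OnePoint.rec with
      | infty =>
        have hWi := wrons_deg_of_inf hr hr2 hcop hv hc
        have := key2 pa pb (fun h => hab (by rw [h])) ha hb
        omega
      | coe pc =>
        exact key3 pa pb pc (fun h => hab (by rw [h])) (fun h => hac (by rw [h]))
          (fun h => hbc (by rw [h])) ha hb hc

end Aux

/-- If `φ = u/v` is a rational map on `ℙ¹(ℂ)` of degree `r ≥ 2` whose second iterate is
not a polynomial (i.e. `(φ²)⁻¹(∞) ≠ {∞}`), then the number of distinct poles of `φⁿ`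
tends to infinity as `n → ∞`. -/
theorem poles_of_iterate_tendsto_atTop
    (u v : Polynomial ℂ) (hcop : IsCoprime u v) (r : ℕ)
    (hr : r = max u.natDegree v.natDegree) (hr2 : 2 ≤ r)
    (hnotpoly : (ratMap u v)^[2] ⁻¹' ({∞} : Set (OnePoint ℂ)) ≠ {∞}) :
    Tendsto (fun n : ℕ => ((ratMap u v)^[n] ⁻¹' ({∞} : Set (OnePoint ℂ))).ncard)
      atTop atTop := by
  classical
  set φ := ratMap u v with hφ
  set S : ℕ → Set (OnePoint ℂ) := fun n => φ^[n] ⁻¹' ({∞} : Set (OnePoint ℂ)) with hSdef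
  have hS0 : S 0 = {∞} := by simp [hSdef]
  have hSsucc : ∀ n, S (n + 1) = φ ⁻¹' (S n) := by
    intro n
    simp only [hSdef]
    rw [Function.iterate_succ]
    rfl
  -- v is nonconstant
  have hv : 0 < v.natDegree := by
    by_contra hcv
    push_neg at hcv
    have hdv : v.natDegree = 0 := by omega
    have hvne : v ≠ 0 := by
      intro h
      have h1 : IsUnit u := isCoprime_zero_right.mp (h ▸ hcop)
      have := Polynomial.natDegree_eq_zero_of_isUnit h1
      have hur : r = u.natDegree := by rw [hr, h]; simp
      omega
    have hur : u.natDegree = r := by rw [hr, hdv]; simp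
    have hc : v = C (v.coeff 0) := Polynomial.eq_C_of_natDegree_eq_zero hdv
    have hc0 : v.coeff 0 ≠ 0 := fun h => hvne (by rw [hc, h, map_zero])
    have hfib : φ ⁻¹' ({∞} : Set (OnePoint ℂ)) = {∞} := by
      ext P
      induction P using OnePoint.rec with
      | infty =>
        simp only [Set.mem_preimage, Set.mem_singleton_iff]
        constructor
        · intro _; trivial
        · intro _
          rw [hφ, ratMap_inf, if_pos (by omega : v.natDegree < u.natDegree)]
      | coe z =>
        simp only [Set.mem_preimage, Set.mem_singleton_iff]
        constructor
        · intro h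
          exfalso
          have h1 : v.eval z = 0 := (fiber_inf_coe z).mp h
          rw [hc] at h1
          simp only [eval_C] at h1
          exact hc0 h1
        · intro h; exact absurd h (OnePoint.coe_ne_infty z)
    apply hnotpoly
    show S 2 = {∞}
    rw [hSsucc 1, hSsucc 0, hS0, hfib, hfib]
  have hsurj : Function.Surjective φ := ratMap_surj hcop hv
  have hSfin : ∀ n, (S n).Finite := by
    intro n
    induction n with
    | zero => rw [hS0]; exact Set.finite_singleton _
    | succ n ih =>
      rw [hSsucc]
      have he : φ ⁻¹' (S n) = ⋃ q ∈ S n, φ ⁻¹' {q} := by ext x; simp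
      rw [he]
      exact Set.Finite.biUnion ih (fun q _ => fiber_finite hcop hv q)
  have hSne : ∀ n, (S n).Nonempty := by
    intro n
    induction n with
    | zero => rw [hS0]; exact ⟨∞, rfl⟩
    | succ n ih =>
      obtain ⟨q, hq⟩ := ih
      obtain ⟨P, hP⟩ := hsurj q
      refine ⟨P, ?_⟩
      rw [hSsucc]
      simp only [Set.mem_preimage]
      rw [hP]
      exact hq
  have himg : ∀ n, φ '' S (n + 1) = S n := by
    intro n
    rw [hSsucc]
    exact Set.image_preimage_eq (S n) hsurj
  have hmono : Monotone fun n => (S n).ncard := by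
    apply monotone_nat_of_le_succ
    intro n
    have hchoice : ∀ q : OnePoint ℂ, φ (Classical.choose (hsurj q)) = q :=
      fun q => Classical.choose_spec (hsurj q)
    refine Set.ncard_le_ncard_of_injOn (fun q => Classical.choose (hsurj q)) ?_ ?_
      (hSfin (n + 1))
    · intro q hq
      rw [hSsucc]
      simp only [Set.mem_preimage]
      rw [hchoice q]
      exact hq
    · intro x hx y hy hxy
      have := congrArg φ hxy
      rwa [hchoice, hchoice] at this
  by_cases hbdd : BddAbove (Set.range fun n => (S n).ncard)
  swap
  · exact tendsto_atTop_atTop_of_monotone' hmono hbdd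
  exfalso
  obtain ⟨N, hN⟩ : ∃ N, ∀ n, N ≤ n → (S n).ncard = (S N).ncard := by
    have hmem : sSup (Set.range fun n => (S n).ncard) ∈ Set.range fun n => (S n).ncard :=
      Nat.sSup_mem ⟨(S 0).ncard, ⟨0, rfl⟩⟩ hbdd
    obtain ⟨N, hN⟩ := hmem
    refine ⟨N, fun n hn => le_antisymm ?_ (hmono hn)⟩
    have h1 : (S n).ncard ≤ sSup (Set.range fun n => (S n).ncard) :=
      le_csSup hbdd ⟨n, rfl⟩
    rwa [← hN] at h1
  have hinj : ∀ n, N ≤ n → Set.InjOn φ (S (n + 1)) := by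
    intro n hn
    apply Set.injOn_of_ncard_image_eq _ (hSfin (n + 1))
    rw [himg n, hN n hn, hN (n + 1) (by omega)]
  have hTR : ∀ n, N ≤ n → ∀ p ∈ S (n + 1), φ ⁻¹' {φ p} = {p} := by
    intro n hn p hp
    ext q
    simp only [Set.mem_preimage, Set.mem_singleton_iff]
    constructor
    · intro hq
      have hfp : φ p ∈ S n := by
        rw [← himg n]
        exact ⟨p, hp, rfl⟩
      have hqin : q ∈ S (n + 1) := by
        rw [hSsucc]
        simp only [Set.mem_preimage]
        rw [hq]
        exact hfp
      exact hinj n hn hqin hp hq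
    · intro h; rw [h]
  have hTR1 : ∀ p ∈ S (N + 1), φ ⁻¹' {φ p} = {p} := hTR N (le_refl N)
  have hTR2 : ∀ p ∈ S (N + 2), φ ⁻¹' {φ p} = {p} := hTR (N + 1) (by omega)
  have hTR3 : ∀ p ∈ S (N + 3), φ ⁻¹' {φ p} = {p} := hTR (N + 2) (by omega)
  -- two of the sets S (N+1), S (N+2), S (N+3) coincide
  have hper : (∃ a, S (a + 1) = S a) ∨ (∃ a, S (a + 2) = S a) := by
    by_cases h2 : ∃ x ∈ S (N + 1), ∃ y ∈ S (N + 1), x ≠ y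
    · obtain ⟨x, hx, y, hy, hxy⟩ := h2
      left
      refine ⟨N + 1, ?_⟩
      have hsub : S (N + 2) ⊆ S (N + 1) := by
        intro z hz
        rcases TR_le_two hr hr2 hcop hv (hTR2 z hz) (hTR1 x hx) (hTR1 y hy) with h | h | h
        · rw [h]; exact hx
        · rw [h]; exact hy
        · exact absurd h hxy
      have : S (N + 2) = S (N + 1) :=
        Set.eq_of_subset_of_ncard_le hsub
          (by rw [hN (N + 1) (by omega), hN (N + 2) (by omega)]) (hSfin (N + 1))
      exact this
    · push_neg at h2
      obtain ⟨x1, hx1⟩ := hSne (N + 1)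
      have hs1 : S (N + 1) = {x1} := by
        ext y
        simp only [Set.mem_singleton_iff]
        constructor
        · intro hy
          by_contra hne
          exact hne (h2 y hy x1 hx1)
        · intro hy; rw [hy]; exact hx1
      have hc1 : (S (N + 1)).ncard = 1 := by rw [hs1]; exact Set.ncard_singleton x1
      have hc2 : (S (N + 2)).ncard = 1 := by
        rw [hN (N + 2) (by omega), ← hN (N + 1) (by omega)]; exact hc1
      have hc3 : (S (N + 3)).ncard = 1 := by
        rw [hN (N + 3) (by omega), ← hN (N + 1) (by omega)]; exact hc1
      obtain ⟨x2, hs2⟩ := Set.ncard_eq_one.mp hc2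
      obtain ⟨x3, hs3⟩ := Set.ncard_eq_one.mp hc3
      have hx2 : x2 ∈ S (N + 2) := by rw [hs2]; rfl
      have hx3 : x3 ∈ S (N + 3) := by rw [hs3]; rfl
      rcases TR_le_two hr hr2 hcop hv (hTR1 x1 hx1) (hTR2 x2 hx2) (hTR3 x3 hx3)
        with h | h | h
      · left
        exact ⟨N + 1, by rw [hs2, hs1, h]⟩
      · right
        exact ⟨N + 1, by rw [show N + 1 + 2 = N + 3 by omega, hs3, hs1, h]⟩
      · left
        exact ⟨N + 2, by rw [show N + 2 + 1 = N + 3 by omega, hs3, hs2, h]⟩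
  have hdown : ∀ d a, S (a + d) = S a → S d = S 0 := by
    intro d a
    induction a with
    | zero =>
      intro h
      rw [zero_add] at h
      exact h
    | succ a ih =>
      intro h
      have h' : φ '' S ((a + d) + 1) = φ '' S (a + 1) := by
        rw [show (a + d) + 1 = a + 1 + d by omega, h]
      rw [himg (a + d), himg a] at h'
      exact ih h'
  have hS2 : S 2 = {∞} := by
    rcases hper with ⟨a, ha⟩ | ⟨a, ha⟩
    · have h1 : S 1 = S 0 := hdown 1 a ha
      calc S 2 = φ ⁻¹' (S 1) := hSsucc 1
        _ = φ ⁻¹' (S 0) := by rw [h1]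
        _ = S 1 := (hSsucc 0).symm
        _ = S 0 := h1
        _ = {∞} := hS0
    · have h2 : S 2 = S 0 := hdown 2 a ha
      rw [h2, hS0]
  exact hnotpoly hS2
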